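/- Let G = (V,E) be a finite simple graph with edge weights w : E → ℝ, and let S ⊆ V be a vertex cover of G of size τ. Then there exists a partition 𝒫 of V into nonempty parts with |𝒫| ≤ τ + 1 that maximizes the utilitarian welfare uw_w(𝒬) = Σ_{C∈𝒬} 2(Σ_{e∈E(G[C])} w(e))/|C| over all partitions 𝒬 of V into nonempty parts. -/

import Mathlib

open Finset

/-- The utilitarian welfare `2(Σ_{e ∈ E(G[C])} w(e))/|C|` of a coalition `C` in a symmetric
weighted fractional hedonic game: for a symmetric weight function `w`, twice the total edge
weight inside `C` equals the sum of `w` over all ordered adjacent pairs inside `C`. -/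
noncomputable def uwW {V : Type*} [DecidableEq V] (G : SimpleGraph V) [DecidableRel G.Adj]
    (w : V → V → ℝ) (C : Finset V) : ℝ :=
  (∑ p ∈ (C ×ˢ C).filter fun p => G.Adj p.1 p.2, w p.1 p.2) / (C.card : ℝ)

/-- If `S` is a vertex cover of a finite edge-weighted graph `G` of size `τ`, then some
partition of the vertex set into at most `τ + 1` nonempty parts maximizes the utilitarian
welfare over all partitions. -/
theorem exists_max_utilitarian_partition_card_le_vertexCover_add_one
    {V : Type*} [Fintype V] [DecidableEq V] (G : SimpleGraph V) [DecidableRel G.Adj]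
    (w : V → V → ℝ) (hw : ∀ u v, w u v = w v u)
    (S : Finset V) (hS : ∀ u v, G.Adj u v → u ∈ S ∨ v ∈ S) :
    ∃ P : Finpartition (Finset.univ : Finset V),
      P.parts.card ≤ S.card + 1 ∧
      ∀ Q : Finpartition (Finset.univ : Finset V),
        ∑ C ∈ Q.parts, uwW G w C ≤ ∑ C ∈ P.parts, uwW G w C := by
  classical
  -- a coalition avoiding the vertex cover has zero welfare
  have key : ∀ C : Finset V, (∀ v ∈ C, v ∉ S) → uwW G w C = 0 := by
    intro C hC
    have he : ((C ×ˢ C).filter fun p => G.Adj p.1 p.2) = ∅ := by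
      ext p
      simp only [mem_filter, mem_product, notMem_empty, iff_false, not_and]
      intro ⟨h1, h2⟩ hadj
      rcases hS _ _ hadj with h | h
      · exact hC _ h1 h
      · exact hC _ h2 h
    simp [uwW, he]
  -- take a welfare-maximizing partition Q
  obtain ⟨Q, hQmax⟩ := Finite.exists_max
    (fun Q : Finpartition (Finset.univ : Finset V) => ∑ C ∈ Q.parts, uwW G w C)
  -- split parts into those meeting S and those avoiding S
  set A : Finset (Finset V) := Q.parts.filter (fun C => (C ∩ S).Nonempty) with hA
  set B : Finset (Finset V) := Q.parts.filter (fun C => ¬ (C ∩ S).Nonempty) with hB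
  set M : Finset V := B.sup id with hM
  have hAB : A ∪ B = Q.parts := filter_union_filter_not_eq _ _
  have hMfree : ∀ v ∈ M, v ∉ S := by
    intro v hv hvS
    obtain ⟨C, hC, hvC⟩ := Finset.mem_sup.1 hv
    exact (Finset.mem_filter.1 hC).2 ⟨v, Finset.mem_inter.2 ⟨hvC, hvS⟩⟩
  have hBfree : ∀ C ∈ B, uwW G w C = 0 := by
    intro C hC
    refine key C fun v hv hvS => (Finset.mem_filter.1 hC).2 ⟨v, Finset.mem_inter.2 ⟨hv, hvS⟩⟩
  have hMnotA : M ∉ A := by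
    intro hMA
    obtain ⟨v, hv⟩ := (Finset.mem_filter.1 hMA).2
    exact hMfree v (Finset.mem_inter.1 hv).1 (Finset.mem_inter.1 hv).2
  -- the new parts are pairwise disjoint
  have hdisjA : ∀ C ∈ A, ∀ D ∈ A, C ≠ D → Disjoint C D := by
    intro C hC D hD hne
    exact Q.disjoint (Finset.filter_subset _ _ hC) (Finset.filter_subset _ _ hD) hne
  have hMdisj : ∀ C ∈ A, Disjoint M C := by
    intro C hC
    rw [hM, Finset.disjoint_sup_left]
    intro D hD
    refine Q.disjoint (Finset.filter_subset _ _ hD) (Finset.filter_subset _ _ hC) ?_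
    rintro rfl
    exact (Finset.mem_filter.1 hD).2 (Finset.mem_filter.1 hC).2
  have hindep : (insert M A).SupIndep id := by
    rw [Finset.supIndep_iff_pairwiseDisjoint]
    intro C hC D hD hne
    simp only [Finset.coe_insert, Set.mem_insert_iff, Finset.mem_coe] at hC hD
    rcases hC with rfl | hC <;> rcases hD with rfl | hD
    · exact absurd rfl hne
    · exact hMdisj D hD
    · exact (hMdisj C hC).symm
    · exact hdisjA C hC D hD hne
  have hsup : (insert M A).sup id = (Finset.univ : Finset V) := by
    rw [Finset.sup_insert, ← Q.sup_parts, ← hAB, Finset.sup_union]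
    simp only [id]
    rw [sup_comm]
  refine ⟨Finpartition.ofErase (insert M A) hindep hsup, ?_, ?_⟩
  · -- cardinality bound
    have hAcard : A.card ≤ S.card := by
      rcases A.eq_empty_or_nonempty with hAe | ⟨C₀, hC₀⟩
      · simp [hAe]
      have : Nonempty V := by
        obtain ⟨v, hv⟩ := (Finset.mem_filter.1 hC₀).2
        exact ⟨v⟩
      refine Finset.card_le_card_of_injOn
        (fun C => if h : (C ∩ S).Nonempty then h.choose else Classical.arbitrary V) ?_ ?_
      · intro C hC
        have h := (Finset.mem_filter.1 hC).2
        simp only [h, dif_pos]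
        exact (Finset.mem_inter.1 h.choose_spec).2
      · intro C hC D hD hfeq
        have h1 := (Finset.mem_filter.1 hC).2
        have h2 := (Finset.mem_filter.1 hD).2
        simp only [h1, h2, dif_pos] at hfeq
        by_contra hne
        have hd := hdisjA C hC D hD hne
        have hmC : h1.choose ∈ C := (Finset.mem_inter.1 h1.choose_spec).1
        have hmD : h2.choose ∈ D := (Finset.mem_inter.1 h2.choose_spec).1
        rw [hfeq] at hmC
        exact (Finset.disjoint_left.1 hd) hmC hmD
    calc ((insert M A).erase ∅).card ≤ (insert M A).card :=
          Finset.card_le_card (erase_subset _ _)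
      _ ≤ A.card + 1 := Finset.card_insert_le _ _
      _ ≤ S.card + 1 := by omega
  · -- optimality
    intro Q'
    refine le_trans (hQmax Q') (le_of_eq ?_)
    have hsumQ : ∑ C ∈ Q.parts, uwW G w C = ∑ C ∈ A, uwW G w C := by
      rw [← hAB, Finset.sum_union (Finset.disjoint_filter_filter_not _ _ _)]
      rw [Finset.sum_congr rfl hBfree]
      rw [Finset.sum_const_zero, add_zero]
    have hAno : ∅ ∉ A := fun h => Q.bot_notMem (Finset.filter_subset _ _ h)
    have hperase : ((insert M A).erase ∅) = if M = ∅ then A else insert M A := by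
      split_ifs with hMe
      · rw [hMe, Finset.erase_insert hAno]
      · refine Finset.erase_eq_of_notMem ?_
        simp only [Finset.mem_insert, not_or]
        exact ⟨fun h => hMe h.symm, hAno⟩
    have hsumP : ∑ C ∈ (insert M A).erase ∅, uwW G w C = ∑ C ∈ A, uwW G w C := by
      rw [hperase]
      split_ifs with hMe
      · rfl
      · rw [Finset.sum_insert hMnotA, key M hMfree, zero_add]
    rw [hsumQ]
    simp only [Finpartition.ofErase]
    exact hsumP.symm
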